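/- arXiv:2011.04220 — 3 statements merged into one kernel-verified Lean document; each statement's English description precedes it below -/
import Mathlib

section
/- The harmonic (stuffle) product on the ℚ-vector space ℐ spanned by formal symbols [k_1,...,k_r] of indices, defined inductively by [k]∗[∅]=[∅]∗[k]=[k] and [k,k]∗[l,l] = [([k,k]∗[l]),l] + [([k]∗[l,l]),k] + [([k]∗[l]), k+l], is commutative and associative with unit [∅]. -/
/-- An index: a finite sequence of positive integers. -/
abbrev Idx := List ℕ+

/-- The `ℚ`-linear space `ℐ` spanned by formal symbols of indices. -/
abbrev IdxAlg := Idx →₀ ℚ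

/-- Auxiliary harmonic product on indices *stored in reversed order*, so that the
recursion acts on the last components of the original indices, as in the paper:
`[k,k]∗[l,l] = [([k,k]∗[l]),l] + [([k]∗[l,l]),k] + [([k]∗[l]),k+l]`. -/
noncomputable def hpAux : Idx → Idx → IdxAlg
  | [], l => Finsupp.single l 1
  | a :: as, [] => Finsupp.single (a :: as) 1
  | a :: as, b :: bs =>
      Finsupp.mapDomain (a :: ·) (hpAux as (b :: bs)) +
      Finsupp.mapDomain (b :: ·) (hpAux (a :: as) bs) +
      Finsupp.mapDomain ((a + b) :: ·) (hpAux as bs)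
termination_by k l => k.length + l.length

/-- The harmonic (stuffle) product of two index symbols. -/
noncomputable def hp (k l : Idx) : IdxAlg :=
  Finsupp.mapDomain List.reverse (hpAux k.reverse l.reverse)

/-- The bilinear extension of the harmonic product to `ℐ`. -/
noncomputable def hmul (u v : IdxAlg) : IdxAlg :=
  u.sum fun k ck => v.sum fun l cl => (ck * cl) • hp k l


lemma hpAux_nil_left (l : Idx) : hpAux [] l = Finsupp.single l 1 := by simp [hpAux]
lemma hpAux_nil_right (k : Idx) : hpAux k [] = Finsupp.single k 1 := by cases k <;> simp [hpAux]

noncomputable def consL (x : ℕ+) : IdxAlg →ₗ[ℚ] IdxAlg := Finsupp.lmapDomain ℚ ℚ (x :: ·)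

lemma hpAux_cons (a b : ℕ+) (as bs : Idx) : hpAux (a::as) (b::bs) =
      consL a (hpAux as (b :: bs)) + consL b (hpAux (a :: as) bs) +
      consL (a + b) (hpAux as bs) := by rw [hpAux]; rfl

lemma hpAux_comm (k l : Idx) : hpAux k l = hpAux l k := by
  match k, l with
  | [], l => rw [hpAux_nil_left, hpAux_nil_right]
  | a :: as, [] => rw [hpAux_nil_left, hpAux_nil_right]
  | a :: as, b :: bs =>
    rw [hpAux_cons, hpAux_cons, hpAux_comm as (b::bs), hpAux_comm (a::as) bs,
      hpAux_comm as bs, add_comm b a]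
    abel
termination_by k.length + l.length

noncomputable def B : IdxAlg →ₗ[ℚ] IdxAlg →ₗ[ℚ] IdxAlg :=
  Finsupp.lsum ℚ fun k => LinearMap.toSpanSingleton ℚ _
    (Finsupp.lsum ℚ fun l => LinearMap.toSpanSingleton ℚ IdxAlg (hpAux k l))

lemma B_single_single (k l : Idx) : B (Finsupp.single k 1) (Finsupp.single l 1) = hpAux k l := by
  simp [B]

lemma B_comm (u v : IdxAlg) : B u v = B v u := by
  induction u using Finsupp.induction_linear with
  | zero => simp
  | add f g hf hg => simp [map_add, hf, hg]
  | single k b =>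
    induction v using Finsupp.induction_linear with
    | zero => simp
    | add f g hf hg => simp [map_add, hf, hg]
    | single l c =>
      have h1 : (Finsupp.single k b : IdxAlg) = b • Finsupp.single k 1 := by simp
      have h2 : (Finsupp.single l c : IdxAlg) = c • Finsupp.single l 1 := by simp
      rw [h1, h2]
      simp only [map_smul, LinearMap.smul_apply, B_single_single, hpAux_comm k l, smul_comm b c]

lemma B_unit_left (u : IdxAlg) : B (Finsupp.single [] 1) u = u := by
  induction u using Finsupp.induction_linear with
  | zero => simp
  | add f g hf hg => simp [map_add, hf, hg]
  | single l c =>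
    have h2 : (Finsupp.single l c : IdxAlg) = c • Finsupp.single l 1 := by simp
    rw [h2, map_smul, B_single_single, hpAux_nil_left]

lemma B_unit_right (u : IdxAlg) : B u (Finsupp.single [] 1) = u := by
  rw [B_comm, B_unit_left]

-- right expansion
lemma B_cons_right (x c : ℕ+) (cs : Idx) (w : IdxAlg) :
    B (consL x w) (Finsupp.single (c::cs) 1) =
      consL x (B w (Finsupp.single (c::cs) 1)) +
      consL c (B (consL x w) (Finsupp.single cs 1)) +
      consL (x+c) (B w (Finsupp.single cs 1)) := by
  induction w using Finsupp.induction_linear with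
  | zero => simp
  | add f g hf hg => simp only [map_add, LinearMap.add_apply, hf, hg]; abel
  | single k b =>
    have h1 : (Finsupp.single k b : IdxAlg) = b • Finsupp.single k 1 := by simp
    rw [h1]
    simp only [map_smul, LinearMap.smul_apply, ← smul_add]
    congr 1
    have : consL x (Finsupp.single k 1) = Finsupp.single (x::k) (1:ℚ) := by
      simp [consL]
    rw [this]; simp only [B_single_single]; rw [hpAux_cons]

-- left expansion
lemma B_cons_left (a b : ℕ+) (as : Idx) (w : IdxAlg) :
    B (Finsupp.single (a::as) 1) (consL b w) =
      consL a (B (Finsupp.single as 1) (consL b w)) +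
      consL b (B (Finsupp.single (a::as) 1) w) +
      consL (a+b) (B (Finsupp.single as 1) w) := by
  induction w using Finsupp.induction_linear with
  | zero => simp
  | add f g hf hg => simp only [map_add, hf, hg]; abel
  | single l d =>
    have h1 : (Finsupp.single l d : IdxAlg) = d • Finsupp.single l 1 := by simp
    rw [h1]
    simp only [map_smul, ← smul_add]
    congr 1
    have : consL b (Finsupp.single l 1) = Finsupp.single (b::l) (1:ℚ) := by
      simp [consL]
    rw [this]; simp only [B_single_single]; rw [hpAux_cons]

lemma B_assoc_core : ∀ (n : ℕ) (k l m : Idx), k.length + l.length + m.length ≤ n →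
    B (hpAux k l) (Finsupp.single m 1) = B (Finsupp.single k 1) (hpAux l m) := by
  intro n
  induction n with
  | zero =>
    intro k l m h
    cases k with
    | nil => rw [hpAux_nil_left, B_single_single, B_unit_left]
    | cons a as => simp at h
  | succ n ih =>
    intro k l m h
    cases k with
    | nil => rw [hpAux_nil_left, B_single_single, B_unit_left]
    | cons a as =>
      cases l with
      | nil => rw [hpAux_nil_right, hpAux_nil_left, B_single_single]
      | cons b bs =>
        cases m with
        | nil => rw [B_unit_right, hpAux_nil_right, B_single_single]
        | cons c cs =>
          simp only [List.length_cons] at h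
          have IH1 := ih as (b::bs) (c::cs) (by simp only [List.length_cons]; omega)
          have IH2 := ih (a::as) bs (c::cs) (by simp only [List.length_cons]; omega)
          have IH3 := ih as bs (c::cs) (by simp only [List.length_cons]; omega)
          have IH4 := ih (a::as) (b::bs) cs (by simp only [List.length_cons]; omega)
          have IH5 := ih as (b::bs) cs (by simp only [List.length_cons]; omega)
          have IH6 := ih (a::as) bs cs (by simp only [List.length_cons]; omega)
          have IH7 := ih as bs cs (by omega)
          have hC : B (consL a (hpAux as (b::bs))) (Finsupp.single cs 1) +
              B (consL b (hpAux (a::as) bs)) (Finsupp.single cs 1) +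
              B (consL (a+b) (hpAux as bs)) (Finsupp.single cs 1) =
              B (Finsupp.single (a::as) 1) (hpAux (b::bs) cs) := by
            rw [← LinearMap.add_apply, ← LinearMap.add_apply, ← map_add, ← map_add,
              ← hpAux_cons, IH4]
          have hA : B (Finsupp.single as 1) (consL b (hpAux bs (c::cs))) +
              B (Finsupp.single as 1) (consL c (hpAux (b::bs) cs)) +
              B (Finsupp.single as 1) (consL (b+c) (hpAux bs cs)) =
              B (Finsupp.single as 1) (hpAux (b::bs) (c::cs)) := by
            rw [← map_add, ← map_add, ← hpAux_cons]
          rw [hpAux_cons a b as bs]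
          simp only [map_add, LinearMap.add_apply]
          rw [B_cons_right a c cs, B_cons_right b c cs, B_cons_right (a+b) c cs,
            IH1, IH2, IH3, IH5, IH6, IH7]
          conv_rhs => rw [hpAux_cons b c bs cs]
          simp only [map_add]
          rw [B_cons_left a b as, B_cons_left a c as, B_cons_left a (b+c) as,
            ← hC, ← hA, ← add_assoc a b c]
          simp only [map_add]
          abel

noncomputable def Rl : IdxAlg →ₗ[ℚ] IdxAlg := Finsupp.lmapDomain ℚ ℚ List.reverse

lemma Rl_Rl (u : IdxAlg) : Rl (Rl u) = u := by
  simp [Rl, ← Finsupp.mapDomain_comp, Function.comp_def]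

lemma B_assoc (u v w : IdxAlg) : B (B u v) w = B u (B v w) := by
  induction u using Finsupp.induction_linear with
  | zero => simp
  | add f g hf hg => simp [map_add, hf, hg]
  | single k b =>
    induction v using Finsupp.induction_linear with
    | zero => simp
    | add f g hf hg => simp [map_add, hf, hg]
    | single l c =>
      induction w using Finsupp.induction_linear with
      | zero => simp
      | add f g hf hg => simp [map_add, hf, hg]
      | single m d =>
        have h1 : (Finsupp.single k b : IdxAlg) = b • Finsupp.single k 1 := by simp
        have h2 : (Finsupp.single l c : IdxAlg) = c • Finsupp.single l 1 := by simp
        have h3 : (Finsupp.single m d : IdxAlg) = d • Finsupp.single m 1 := by simp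
        rw [h1, h2, h3]
        simp only [map_smul, LinearMap.smul_apply, B_single_single]
        rw [B_assoc_core (k.length + l.length + m.length) k l m le_rfl]

lemma hmul_eq (u v : IdxAlg) : hmul u v = Rl (B (Rl u) (Rl v)) := by
  induction u using Finsupp.induction_linear with
  | zero => simp [hmul]
  | add f g hf hg =>
    have hL : hmul (f + g) v = hmul f v + hmul g v := by
      unfold hmul
      rw [Finsupp.sum_add_index']
      · intro k; simp
      · intro k b1 b2; simp [add_mul, add_smul, Finsupp.sum_add]
    rw [hL, hf, hg]; simp [map_add]
  | single k b =>
    unfold hmul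
    rw [Finsupp.sum_single_index (by simp)]
    induction v using Finsupp.induction_linear with
    | zero => simp
    | add f g hf hg =>
      rw [Finsupp.sum_add_index' (by intro l; simp) (by intro l c1 c2; simp [mul_add, add_smul])]
      rw [hf, hg]; simp [map_add]
    | single l c =>
      rw [Finsupp.sum_single_index (by simp)]
      have h1 : Rl (Finsupp.single k b) = Finsupp.single k.reverse b := by simp [Rl]
      have h2 : Rl (Finsupp.single l c) = Finsupp.single l.reverse c := by simp [Rl]
      rw [h1, h2]
      have h3 : (Finsupp.single k.reverse b : IdxAlg) = b • Finsupp.single k.reverse 1 := by simp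
      have h4 : (Finsupp.single l.reverse c : IdxAlg) = c • Finsupp.single l.reverse 1 := by simp
      rw [h3, h4]
      simp only [map_smul, LinearMap.smul_apply, B_single_single]
      rw [smul_smul, mul_comm c b]
      congr 1

/-- The star-sum `[l₁,…,l_s]^⋆`: the sum of all `[l₁□⋯□l_s]` with each `□` replaced by
`+` or `,`. -/
noncomputable def starSym : Idx → IdxAlg
  | [] => Finsupp.single [] 1
  | [a] => Finsupp.single [a] 1
  | a :: b :: rest =>
      Finsupp.mapDomain (a :: ·) (starSym (b :: rest)) + starSym ((a + b) :: rest)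
termination_by l => l.length

/-- The linear map `S̃ : ℐ → ℐ` with `S̃([k]) = (−1)^{dep k}[k]^⋆`. -/
noncomputable def Stilde (u : IdxAlg) : IdxAlg :=
  u.sum fun k c => ((-1 : ℚ) ^ k.length * c) • starSym k

/-- The harmonic product on `ℐ` is commutative and associative with unit `[∅]`. -/
theorem hmul_comm_assoc_one :
    (∀ u v : IdxAlg, hmul u v = hmul v u) ∧
    (∀ u v w : IdxAlg, hmul (hmul u v) w = hmul u (hmul v w)) ∧
    (∀ u : IdxAlg, hmul (Finsupp.single [] 1) u = u ∧ hmul u (Finsupp.single [] 1) = u) := by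
  refine ⟨fun u v => ?_, fun u v w => ?_, fun u => ⟨?_, ?_⟩⟩
  · rw [hmul_eq, hmul_eq, B_comm]
  · rw [hmul_eq (hmul u v) w, hmul_eq u v, Rl_Rl, B_assoc, ← Rl_Rl (B (Rl v) (Rl w)),
      ← hmul_eq v w, ← hmul_eq u (hmul v w)]
  · rw [hmul_eq, show Rl (Finsupp.single ([]:Idx) (1:ℚ)) = Finsupp.single [] 1 by simp [Rl],
      B_unit_left, Rl_Rl]
  · rw [hmul_eq, show Rl (Finsupp.single ([]:Idx) (1:ℚ)) = Finsupp.single [] 1 by simp [Rl],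
      B_unit_right, Rl_Rl]
end

section
/- The linear map S̃: ℐ → ℐ defined by S̃([k₁,...,k_r]) = (−1)^r [k₁,...,k_r]^⋆, where [l₁,...,l_s]^⋆ is the sum of all [l₁□⋯□l_s] with each □ replaced by '+' or ',', is an involution: S̃ ∘ S̃ = id. -/
/- Auxiliary material for the proof. -/

/-- Add `a` to the head entry of an index (or create the entry if empty). -/
def addHead (a : ℕ+) : Idx → Idx
  | [] => [a]
  | b :: t => (a + b) :: t

/-- `Stilde` as a linear map. -/
noncomputable def StL : IdxAlg →ₗ[ℚ] IdxAlg :=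
  Finsupp.lsum ℚ fun k =>
    ((-1 : ℚ) ^ k.length) • LinearMap.toSpanSingleton ℚ IdxAlg (starSym k)

lemma StL_single (k : Idx) (c : ℚ) :
    StL (Finsupp.single k c) = ((-1 : ℚ) ^ k.length * c) • starSym k := by
  simp [StL, LinearMap.toSpanSingleton_apply, smul_smul, mul_comm]

lemma Stilde_eq (u : IdxAlg) : Stilde u = StL u := by
  rw [Stilde, StL, Finsupp.lsum_apply]
  refine Finsupp.sum_congr fun k _ => ?_
  simp [LinearMap.toSpanSingleton_apply, smul_smul]

lemma starSym_addHead (a : ℕ+) (b : ℕ+) (t : Idx) :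
    Finsupp.mapDomain (addHead a) (starSym (b :: t)) = starSym ((a + b) :: t) := by
  induction t generalizing b with
  | nil => simp [starSym, Finsupp.mapDomain_single, addHead]
  | cons c r ih =>
    rw [show starSym (b :: c :: r) =
        Finsupp.mapDomain (b :: ·) (starSym (c :: r)) + starSym ((b + c) :: r) from by
          rw [starSym],
      show starSym ((a + b) :: c :: r) =
        Finsupp.mapDomain ((a + b) :: ·) (starSym (c :: r)) + starSym ((a + b + c) :: r) from by
          rw [starSym],
      Finsupp.mapDomain_add, ← Finsupp.mapDomain_comp, ih]
    have h1 : addHead a ∘ (b :: ·) = ((a + b) :: ·) := by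
      funext l; rfl
    rw [h1, add_assoc]

lemma starSym_apply_nil (a : ℕ+) (t : Idx) : (starSym (a :: t)) [] = 0 := by
  induction t generalizing a with
  | nil => simp [starSym, Finsupp.single_apply]
  | cons b r ih =>
    rw [show starSym (a :: b :: r) =
        Finsupp.mapDomain (a :: ·) (starSym (b :: r)) + starSym ((a + b) :: r) from by
          rw [starSym]]
    rw [Finsupp.add_apply, ih]
    rw [Finsupp.mapDomain_notin_range]
    · simp
    · simp

lemma StL_mapDomain_cons (a : ℕ+) (v : IdxAlg) (hv : v [] = 0) :
    StL (Finsupp.mapDomain (a :: ·) v) =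
      -(Finsupp.mapDomain (a :: ·) (StL v)) - StL (Finsupp.mapDomain (addHead a) v) := by
  induction v using Finsupp.induction with
  | zero => simp
  | single_add l c w hlw hc ih =>
    have hl : l ≠ [] := by
      intro h
      subst h
      have hw : w [] = 0 := Finsupp.notMem_support_iff.mp hlw
      simp [Finsupp.add_apply, hw, hc] at hv
    have hw0 : w [] = 0 := by
      have : Finsupp.single l c [] = 0 := Finsupp.single_eq_of_ne hl.symm
      simpa [Finsupp.add_apply, this] using hv
    obtain ⟨b, t, rfl⟩ : ∃ b t, l = b :: t := by
      cases l with
      | nil => exact absurd rfl hl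
      | cons b t => exact ⟨b, t, rfl⟩
    rw [Finsupp.mapDomain_add, Finsupp.mapDomain_add, map_add, map_add, map_add,
      Finsupp.mapDomain_add, ih hw0]
    have hsingle :
        StL (Finsupp.mapDomain (a :: ·) (Finsupp.single (b :: t) c)) =
          -(Finsupp.mapDomain (a :: ·) (StL (Finsupp.single (b :: t) c))) -
            StL (Finsupp.mapDomain (addHead a) (Finsupp.single (b :: t) c)) := by
      rw [Finsupp.mapDomain_single, Finsupp.mapDomain_single, StL_single, StL_single,
        show addHead a (b :: t) = (a + b) :: t from rfl, StL_single,
        show starSym (a :: b :: t) =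
          Finsupp.mapDomain (a :: ·) (starSym (b :: t)) + starSym ((a + b) :: t) from by
            rw [starSym],
        Finsupp.mapDomain_smul]
      have hs : ((-1 : ℚ) ^ (a :: b :: t).length * c) = -((-1 : ℚ) ^ (b :: t).length * c) := by
        simp [pow_succ]
      have hs2 : ((-1 : ℚ) ^ ((a + b) :: t).length * c) = ((-1 : ℚ) ^ (b :: t).length * c) := by
        simp
      rw [hs, hs2, neg_smul, smul_add]
      abel
    rw [hsingle]
    abel

lemma StL_starSym (k : Idx) :
    StL (starSym k) = ((-1 : ℚ) ^ k.length) • Finsupp.single k (1 : ℚ) := by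
  induction k with
  | nil => simp [starSym, StL_single]
  | cons a k ih =>
    cases k with
    | nil =>
      have h : starSym [a] = Finsupp.single [a] 1 := by rw [starSym.eq_2]
      rw [h, StL_single]
      simp [h]
    | cons b t =>
      rw [show starSym (a :: b :: t) =
          Finsupp.mapDomain (a :: ·) (starSym (b :: t)) + starSym ((a + b) :: t) from by
            rw [starSym],
        map_add, StL_mapDomain_cons a _ (starSym_apply_nil b t), starSym_addHead, ih]
      rw [Finsupp.mapDomain_smul, Finsupp.mapDomain_single]
      have : ((-1 : ℚ) ^ (a :: b :: t).length) = -((-1 : ℚ) ^ (b :: t).length) := by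
        simp [pow_succ]
      rw [this, neg_smul]
      abel

/-- The linear map `S̃` with `S̃([k]) = (−1)^{dep k}[k]^⋆` is an involution. -/
theorem Stilde_involution : ∀ u : IdxAlg, Stilde (Stilde u) = u := by
  intro u
  rw [Stilde_eq, Stilde_eq]
  induction u using Finsupp.induction_linear with
  | zero => simp
  | add f g hf hg => rw [map_add, map_add, hf, hg]
  | single k c =>
    rw [StL_single, map_smul, StL_starSym, smul_smul]
    have : (-1 : ℚ) ^ k.length * c * (-1 : ℚ) ^ k.length = c := by
      rw [mul_comm ((-1 : ℚ) ^ k.length) c, mul_assoc, ← pow_add]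
      simp [Even.neg_one_pow ⟨k.length, rfl⟩]
    rw [this, Finsupp.smul_single, smul_eq_mul, mul_one]
end

section
/- Harmonic product of an MZV and a zeta-star value as anti-hook Schur MZVs: for nonempty admissible indices (k₁,…,k_r) and (l₁,…,l_s), ζ(k₁,…,k_r)·ζ*(l₁,…,l_s) = ζ[(k₁,…,k_{r−1})//(l₁,…,l_s); k_r] + ζ[(k₁,…,k_r)//(l₁,…,l_{s−1}); l_s], where ζ[(k)//(l); a] = Σ over positive integers m₁<⋯<m_r<p and n₁≤⋯≤n_s≤p of 1/(m₁^{k₁}⋯m_r^{k_r} n₁^{l₁}⋯n_s^{l_s} p^a). -/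
/-- The multiple zeta value `ζ(k₁,…,k_r)`. -/
noncomputable def mzv (ks : List ℕ) : ℝ :=
  ∑' f : {f : Fin ks.length → ℕ+ // StrictMono f},
    ∏ i : Fin ks.length, ((f.1 i : ℝ) ^ ks.get i)⁻¹

/-- The multiple zeta-star value `ζ*(l₁,…,l_s)`. -/
noncomputable def mzvStar (ls : List ℕ) : ℝ :=
  ∑' f : {f : Fin ls.length → ℕ+ // Monotone f},
    ∏ i : Fin ls.length, ((f.1 i : ℝ) ^ ls.get i)⁻¹

/-- The Schur multiple zeta value of anti-hook type
`ζ[(k₁,…,k_r)//(l₁,…,l_s); a]`, the sum over positive integers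
`m₁ < ⋯ < m_r < p` and `n₁ ≤ ⋯ ≤ n_s ≤ p` of
`1/(m₁^{k₁} ⋯ m_r^{k_r} n₁^{l₁} ⋯ n_s^{l_s} p^a)`. -/
noncomputable def zetaAntiHook (ks ls : List ℕ) (a : ℕ) : ℝ :=
  ∑' t : {t : (Fin ks.length → ℕ+) × (Fin ls.length → ℕ+) × ℕ+ //
      StrictMono t.1 ∧ Monotone t.2.1 ∧ (∀ i, t.1 i < t.2.2) ∧ (∀ i, t.2.1 i ≤ t.2.2)},
    (∏ i : Fin ks.length, ((t.1.1 i : ℝ) ^ ks.get i)⁻¹) *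
      (∏ i : Fin ls.length, ((t.1.2.1 i : ℝ) ^ ls.get i)⁻¹) * ((t.1.2.2 : ℝ) ^ a)⁻¹

section AntiHookAuxSection

open scoped ENNReal
open Filter Asymptotics

namespace AntiHookAux


noncomputable def E (k : ℕ) (m : ℕ+) : ℝ≥0∞ := (((m : ℕ) : ℝ≥0∞) ^ k)⁻¹

noncomputable def Z {n : ℕ} (k : Fin n → ℕ) : ℝ≥0∞ :=
  ∑' f : {f : Fin n → ℕ+ // StrictMono f}, ∏ i, E (k i) (f.1 i)

noncomputable def Zs {n : ℕ} (l : Fin n → ℕ) : ℝ≥0∞ :=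
  ∑' g : {g : Fin n → ℕ+ // Monotone g}, ∏ i, E (l i) (g.1 i)

abbrev AHsub (n m : ℕ) :=
  {t : (Fin n → ℕ+) × (Fin m → ℕ+) × ℕ+ //
      StrictMono t.1 ∧ Monotone t.2.1 ∧ (∀ i, t.1 i < t.2.2) ∧ (∀ i, t.2.1 i ≤ t.2.2)}

noncomputable def AH {n m : ℕ} (k : Fin n → ℕ) (l : Fin m → ℕ) (a : ℕ) : ℝ≥0∞ :=
  ∑' t : AHsub n m,
    (∏ i, E (k i) (t.1.1 i)) * (∏ j, E (l j) (t.1.2.1 j)) * E a t.1.2.2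

abbrev SM (r s : ℕ) := {f : Fin r → ℕ+ // StrictMono f} × {g : Fin s → ℕ+ // Monotone g}

lemma strictMono_snoc {n : ℕ} (m : Fin n → ℕ+) (p : ℕ+) (hm : StrictMono m)
    (hp : ∀ i, m i < p) : StrictMono (Fin.snoc m p) := by
  intro i j hij
  induction j using Fin.lastCases with
  | last =>
      obtain ⟨i', rfl⟩ := Fin.exists_castSucc_eq.2 (Fin.ne_last_of_lt hij)
      simpa [Fin.snoc_castSucc, Fin.snoc_last] using hp i'
  | cast j' =>
      obtain ⟨i', rfl⟩ := Fin.exists_castSucc_eq.2 (Fin.ne_last_of_lt hij)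
      simpa [Fin.snoc_castSucc] using hm (show i' < j' by simpa using hij)

lemma monotone_snoc {n : ℕ} (m : Fin n → ℕ+) (p : ℕ+) (hm : Monotone m)
    (hp : ∀ i, m i ≤ p) : Monotone (Fin.snoc m p) := by
  intro i j hij
  induction j using Fin.lastCases with
  | last =>
      induction i using Fin.lastCases with
      | last => simp
      | cast i' => simpa [Fin.snoc_castSucc, Fin.snoc_last] using hp i'
  | cast j' =>
      have hi : i ≠ Fin.last n := by
        intro h; subst h
        exact absurd hij (by simpa using (Fin.castSucc_lt_last j').not_le)
      obtain ⟨i', rfl⟩ := Fin.exists_castSucc_eq.2 hi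
      simpa [Fin.snoc_castSucc] using hm (show i' ≤ j' by simpa using hij)

def e₁ (r s : ℕ) :
    AHsub r (s + 1) ≃ {x : SM (r + 1) (s + 1) // x.2.1 (Fin.last s) ≤ x.1.1 (Fin.last r)} where
  toFun t :=
    ⟨(⟨Fin.snoc t.1.1 t.1.2.2, strictMono_snoc _ _ t.2.1 t.2.2.2.1⟩,
      ⟨t.1.2.1, t.2.2.1⟩), by
        show t.1.2.1 (Fin.last s) ≤ Fin.snoc (α := fun _ => ℕ+) t.1.1 t.1.2.2 (Fin.last r)
        rw [Fin.snoc_last]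
        exact t.2.2.2.2 (Fin.last s)⟩
  invFun x :=
    ⟨(x.1.1.1 ∘ Fin.castSucc, x.1.2.1, x.1.1.1 (Fin.last r)),
      ⟨fun i j hij => x.1.1.2 (show Fin.castSucc i < Fin.castSucc j by simpa using hij),
       x.1.2.2,
       fun i => x.1.1.2 (Fin.castSucc_lt_last i),
       fun j => (x.1.2.2 (Fin.le_last j)).trans x.2⟩⟩
  left_inv t := by
    apply Subtype.ext
    refine Prod.ext ?_ (Prod.ext rfl ?_)
    · funext i; simp
    · simp
  right_inv x := by
    apply Subtype.ext
    refine Prod.ext (Subtype.ext ?_) rfl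
    show Fin.snoc (α := fun _ => ℕ+) (x.1.1.1 ∘ Fin.castSucc) (x.1.1.1 (Fin.last r)) = x.1.1.1
    funext i
    induction i using Fin.lastCases with
    | last => simp
    | cast i' => simp

def e₂ (r s : ℕ) :
    AHsub (r + 1) s ≃ {x : SM (r + 1) (s + 1) // ¬ x.2.1 (Fin.last s) ≤ x.1.1 (Fin.last r)} where
  toFun t :=
    ⟨(⟨t.1.1, t.2.1⟩,
      ⟨Fin.snoc t.1.2.1 t.1.2.2, monotone_snoc _ _ t.2.2.1 t.2.2.2.2⟩), by
        show ¬ Fin.snoc (α := fun _ => ℕ+) t.1.2.1 t.1.2.2 (Fin.last s) ≤ t.1.1 (Fin.last r)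
        rw [Fin.snoc_last]
        exact (t.2.2.2.1 (Fin.last r)).not_ge⟩
  invFun x :=
    ⟨(x.1.1.1, x.1.2.1 ∘ Fin.castSucc, x.1.2.1 (Fin.last s)),
      ⟨x.1.1.2,
       fun i j hij => x.1.2.2 (show Fin.castSucc i ≤ Fin.castSucc j by simpa using hij),
       fun i => ((x.1.1.2.monotone (Fin.le_last i)).trans_lt (not_le.1 x.2)),
       fun j => x.1.2.2 (Fin.le_last _)⟩⟩
  left_inv t := by
    apply Subtype.ext
    refine Prod.ext rfl (Prod.ext ?_ ?_)
    · funext i; simp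
    · simp
  right_inv x := by
    apply Subtype.ext
    refine Prod.ext rfl (Subtype.ext ?_)
    show Fin.snoc (α := fun _ => ℕ+) (x.1.2.1 ∘ Fin.castSucc) (x.1.2.1 (Fin.last s)) = x.1.2.1
    funext i
    induction i using Fin.lastCases with
    | last => simp
    | cast i' => simp

theorem core {r s : ℕ} (k : Fin (r + 1) → ℕ) (l : Fin (s + 1) → ℕ) :
    Z k * Zs l =
      AH (k ∘ Fin.castSucc) l (k (Fin.last r)) + AH k (l ∘ Fin.castSucc) (l (Fin.last s)) := by
  classical
  set F : SM (r + 1) (s + 1) → ℝ≥0∞ :=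
    fun x => (∏ i, E (k i) (x.1.1 i)) * (∏ j, E (l j) (x.2.1 j)) with hF
  set C : Set (SM (r + 1) (s + 1)) := {x | x.2.1 (Fin.last s) ≤ x.1.1 (Fin.last r)} with hC
  have step1 : Z k * Zs l = ∑' x : SM (r + 1) (s + 1), F x := by
    rw [Z, Zs, ← ENNReal.tsum_mul_right]
    have h2 : ∀ f : {f : Fin (r + 1) → ℕ+ // StrictMono f},
        (∏ i, E (k i) (f.1 i)) * (∑' g : {g : Fin (s + 1) → ℕ+ // Monotone g},
          ∏ j, E (l j) (g.1 j)) = ∑' g : {g : Fin (s + 1) → ℕ+ // Monotone g}, F (f, g) :=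
      fun f => by rw [← ENNReal.tsum_mul_left]
    exact (tsum_congr h2).trans (ENNReal.tsum_prod (f := fun f g => F (f, g))).symm
  have step2 : ∑' x : SM (r + 1) (s + 1), F x =
      (∑' x : C, F x) + (∑' x : (Cᶜ : Set (SM (r + 1) (s + 1))), F x) := by
    rw [tsum_subtype C F, tsum_subtype (Cᶜ) F, ← ENNReal.tsum_add]
    exact tsum_congr fun x => (congrFun (Set.indicator_self_add_compl C F) x).symm
  have part1 : AH (k ∘ Fin.castSucc) l (k (Fin.last r)) = ∑' x : C, F x := by
    rw [AH]
    refine Eq.trans (tsum_congr fun t => ?_) (Equiv.tsum_eq (e₁ r s) (fun x => F x.1))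
    simp only [e₁, Equiv.coe_fn_mk, hF]
    rw [Fin.prod_univ_castSucc (f := fun i => E (k i) (Fin.snoc (α := fun _ => ℕ+) t.1.1 t.1.2.2 i))]
    simp only [Fin.snoc_castSucc, Fin.snoc_last, Function.comp]
    ring
  have part2 : AH k (l ∘ Fin.castSucc) (l (Fin.last s)) =
      ∑' x : (Cᶜ : Set (SM (r + 1) (s + 1))), F x := by
    rw [AH]
    refine Eq.trans (tsum_congr fun t => ?_) (Equiv.tsum_eq (e₂ r s) (fun x => F x.1))
    simp only [e₂, Equiv.coe_fn_mk, hF]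
    rw [Fin.prod_univ_castSucc (f := fun j => E (l j) (Fin.snoc (α := fun _ => ℕ+) t.1.2.1 t.1.2.2 j))]
    simp only [Fin.snoc_castSucc, Fin.snoc_last, Function.comp]
    ring
  rw [step1, step2, part1, part2]



/-- tsum over a finite pi type of a product factorizes. -/
lemma tsum_pi_prod {α : Type*} : ∀ {n : ℕ} (w : Fin n → α → ℝ≥0∞),
    ∑' m : Fin n → α, ∏ i, w i (m i) = ∏ i, ∑' x, w i x := by
  intro n
  induction n with
  | zero =>
      intro w
      simp [tsum_eq_single (default : Fin 0 → α) (fun b hb => absurd (Subsingleton.elim b default) hb)]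
  | succ n ih =>
      intro w
      calc ∑' m : Fin (n + 1) → α, ∏ i, w i (m i)
          = ∑' p : α × (Fin n → α), ∏ i, w i ((Fin.consEquiv (fun _ => α)) p i) :=
            (Equiv.tsum_eq (Fin.consEquiv (fun _ => α)) (fun m => ∏ i, w i (m i))).symm
        _ = ∑' p : α × (Fin n → α), w 0 p.1 * ∏ i, w i.succ (p.2 i) := by
            refine tsum_congr fun p => ?_
            rw [Fin.prod_univ_succ]
            simp [Fin.consEquiv]
        _ = ∑' a : α, ∑' b : Fin n → α, w 0 a * ∏ i, w i.succ (b i) :=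
            ENNReal.tsum_prod (f := fun (a : α) (b : Fin n → α) => w 0 a * ∏ i : Fin n, w i.succ (b i))
        _ = (∑' a : α, w 0 a) * ∑' b : Fin n → α, ∏ i, w i.succ (b i) := by
            simp_rw [ENNReal.tsum_mul_left, ENNReal.tsum_mul_right]
        _ = ∏ i, ∑' x, w i x := by
            rw [ih (fun i x => w i.succ x), Fin.prod_univ_succ]

/-- The truncated harmonic-type sum in `ℝ≥0∞`. -/
noncomputable def hsum (N : ℕ+) : ℝ≥0∞ :=
  ∑' x : ℕ+, if x ≤ N then (((x : ℕ) : ℝ≥0∞))⁻¹ else 0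

lemma hsum_eq (N : ℕ+) : hsum N = ENNReal.ofReal ((harmonic N : ℝ)) := by
  classical
  rw [hsum, tsum_eq_sum (s := Finset.Icc 1 N) ?h]
  · have h1 : ∀ x ∈ Finset.Icc (1 : ℕ+) N,
        (if x ≤ N then (((x : ℕ) : ℝ≥0∞))⁻¹ else 0) = ENNReal.ofReal (((x : ℕ) : ℝ)⁻¹) := by
      intro x hx
      rw [Finset.mem_Icc] at hx
      rw [if_pos hx.2, ENNReal.ofReal_inv_of_pos (by exact_mod_cast x.pos),
        ENNReal.ofReal_natCast]
    rw [Finset.sum_congr rfl h1, ← ENNReal.ofReal_sum_of_nonneg (fun x _ => by positivity)]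
    congr 1
    rw [harmonic_eq_sum_Icc]
    push_cast
    refine Finset.sum_bij (fun (a : ℕ+) _ => (a : ℕ)) ?_ ?_ ?_ ?_
    · intro a ha
      rw [Finset.mem_Icc] at ha ⊢
      exact ⟨by exact_mod_cast ha.1, by exact_mod_cast ha.2⟩
    · intro a _ b _ h
      exact PNat.coe_injective h
    · intro b hb
      rw [Finset.mem_Icc] at hb
      refine ⟨⟨b, lt_of_lt_of_le zero_lt_one hb.1⟩, ?_, rfl⟩
      exact Finset.mem_Icc.2 ⟨PNat.one_le _, hb.2⟩
    · intro a _
      rfl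
  · intro x hx
    rw [Finset.mem_Icc] at hx
    push_neg at hx
    exact if_neg fun h => absurd (hx x.one_le) (not_lt.2 h)



lemma summable_aux (n : ℕ) :
    Summable (fun N : ℕ => (((N : ℝ) ^ 2)⁻¹ * (1 + Real.log N) ^ n)) := by
  have hsum : Summable (fun N : ℕ => ((N : ℝ) ^ (-(3/2 : ℝ)))) :=
    Real.summable_nat_rpow.2 (by norm_num)
  refine summable_of_isBigO_nat hsum ?_
  -- eventual bound on ℝ
  have h0 : (fun x : ℝ => Real.log x ^ (n : ℝ)) =o[atTop] fun x : ℝ => x ^ ((1 : ℝ)/2) :=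
    isLittleO_log_rpow_rpow_atTop _ (by norm_num)
  have hev : ∀ᶠ x : ℝ in atTop, (1 + Real.log x) ^ n ≤ x ^ ((1 : ℝ)/2) := by
    have hb := h0.def (c := ((2 : ℝ) ^ n)⁻¹) (by positivity)
    filter_upwards [hb, Real.tendsto_log_atTop.eventually_ge_atTop 1,
      eventually_ge_atTop (0 : ℝ)] with x hx hlog hx0
    have hlog0 : (0 : ℝ) ≤ Real.log x := zero_le_one.trans hlog
    have h1 : (1 + Real.log x) ^ n ≤ (2 * Real.log x) ^ n := by
      have h : (1 + Real.log x) ≤ 2 * Real.log x := by linarith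
      exact pow_le_pow_left₀ (by linarith) h n
    have h2 : (2 * Real.log x) ^ n = 2 ^ n * Real.log x ^ n := by rw [mul_pow]
    have h3 : Real.log x ^ n = Real.log x ^ (n : ℝ) := (Real.rpow_natCast _ _).symm
    have h4 : ‖Real.log x ^ (n : ℝ)‖ ≤ ((2 : ℝ) ^ n)⁻¹ * ‖x ^ ((1 : ℝ)/2)‖ := hx
    rw [Real.norm_eq_abs, Real.norm_eq_abs, abs_of_nonneg (Real.rpow_nonneg hlog0 _),
      abs_of_nonneg (Real.rpow_nonneg hx0 _)] at h4
    calc (1 + Real.log x) ^ n ≤ 2 ^ n * Real.log x ^ n := by rw [← h2]; exact h1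
      _ = 2 ^ n * Real.log x ^ (n : ℝ) := by rw [h3]
      _ ≤ 2 ^ n * (((2 : ℝ) ^ n)⁻¹ * x ^ ((1 : ℝ)/2)) := by gcongr
      _ = x ^ ((1 : ℝ)/2) := by field_simp
  have hevN : ∀ᶠ N : ℕ in atTop, (1 + Real.log N) ^ n ≤ (N : ℝ) ^ ((1 : ℝ)/2) :=
    (tendsto_natCast_atTop_atTop (R := ℝ)).eventually hev
  refine IsBigO.of_bound 1 ?_
  filter_upwards [hevN, eventually_ge_atTop 1] with N hN hN1
  have hN0 : (0 : ℝ) < N := by exact_mod_cast hN1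
  have hlogN : (0 : ℝ) ≤ 1 + Real.log N := by
    have h := Real.log_nonneg (show (1:ℝ) ≤ (N:ℝ) by exact_mod_cast hN1)
    linarith
  rw [Real.norm_eq_abs, Real.norm_eq_abs, abs_of_nonneg (by positivity),
    abs_of_nonneg (Real.rpow_nonneg hN0.le _), one_mul]
  have key : ((N : ℝ) ^ 2)⁻¹ * (N : ℝ) ^ ((1 : ℝ)/2) = (N : ℝ) ^ (-(3/2 : ℝ)) := by
    rw [← Real.rpow_natCast (N : ℝ) 2, ← Real.rpow_neg hN0.le, ← Real.rpow_add hN0]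
    norm_num
  calc ((N : ℝ) ^ 2)⁻¹ * (1 + Real.log N) ^ n
      ≤ ((N : ℝ) ^ 2)⁻¹ * (N : ℝ) ^ ((1 : ℝ)/2) := by
        have h2 : (0:ℝ) ≤ ((N : ℝ) ^ 2)⁻¹ := by positivity
        exact mul_le_mul_of_nonneg_left hN h2
    _ = (N : ℝ) ^ (-(3/2 : ℝ)) := key



lemma E_anti {j k : ℕ} (h : j ≤ k) (m : ℕ+) : E k m ≤ (((m : ℕ) : ℝ≥0∞) ^ j)⁻¹ := by
  rw [E, ENNReal.inv_le_inv]
  exact pow_le_pow_right' (by exact_mod_cast m.one_le) h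

lemma Zfin {n : ℕ} (k : Fin (n + 1) → ℕ) (hk1 : ∀ i, 1 ≤ k i) (hk2 : 2 ≤ k (Fin.last n))
    (P : (Fin (n + 1) → ℕ+) → Prop)
    (hPle : ∀ f, P f → ∀ i : Fin n, f (Fin.castSucc i) ≤ f (Fin.last n)) :
    (∑' f : {f : Fin (n + 1) → ℕ+ // P f}, ∏ i, E (k i) (f.1 i)) ≠ ⊤ := by
  classical
  set G : ℕ+ × (Fin n → ℕ+) → ℝ≥0∞ := fun p =>
    (((p.1 : ℕ) : ℝ≥0∞) ^ 2)⁻¹ *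
      ∏ i, (if p.2 i ≤ p.1 then (((p.2 i : ℕ) : ℝ≥0∞))⁻¹ else 0) with hG
  have hterm : ∀ f : {f : Fin (n + 1) → ℕ+ // P f},
      (∏ i, E (k i) (f.1 i)) ≤ G (f.1 (Fin.last n), f.1 ∘ Fin.castSucc) := by
    intro f
    rw [Fin.prod_univ_castSucc (f := fun i => E (k i) (f.1 i)), hG]
    dsimp only
    rw [mul_comm]
    refine mul_le_mul' (E_anti hk2 _) ?_
    refine Finset.prod_le_prod' fun i _ => ?_
    simp only [Function.comp_apply]
    rw [if_pos (hPle f.1 f.2 i)]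
    simpa using E_anti (hk1 (Fin.castSucc i)) (f.1 (Fin.castSucc i))
  have hinj : Function.Injective
      (fun f : {f : Fin (n + 1) → ℕ+ // P f} =>
        ((f.1 (Fin.last n), f.1 ∘ Fin.castSucc) : ℕ+ × (Fin n → ℕ+))) := by
    intro f g h
    rw [Prod.mk.injEq] at h
    apply Subtype.ext
    funext i
    induction i using Fin.lastCases with
    | last => exact h.1
    | cast i' => exact congrFun h.2 i'
  have h1 : (∑' f : {f : Fin (n + 1) → ℕ+ // P f}, ∏ i, E (k i) (f.1 i)) ≤
      ∑' p : ℕ+ × (Fin n → ℕ+), G p :=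
    le_trans (ENNReal.tsum_le_tsum hterm) (ENNReal.tsum_comp_le_tsum_of_injective hinj G)
  have h2 : ∑' p : ℕ+ × (Fin n → ℕ+), G p =
      ∑' N : ℕ+, (((N : ℕ) : ℝ≥0∞) ^ 2)⁻¹ * (hsum N) ^ n := by
    calc ∑' p : ℕ+ × (Fin n → ℕ+), G p
        = ∑' (N : ℕ+) (m : Fin n → ℕ+),
            (((N : ℕ) : ℝ≥0∞) ^ 2)⁻¹ *
              ∏ i, (if m i ≤ N then (((m i : ℕ) : ℝ≥0∞))⁻¹ else 0) :=
          ENNReal.tsum_prod (f := fun (N : ℕ+) (m : Fin n → ℕ+) =>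
            (((N : ℕ) : ℝ≥0∞) ^ 2)⁻¹ *
              ∏ i, (if m i ≤ N then (((m i : ℕ) : ℝ≥0∞))⁻¹ else 0))
      _ = ∑' N : ℕ+, (((N : ℕ) : ℝ≥0∞) ^ 2)⁻¹ * (hsum N) ^ n := by
          refine tsum_congr fun N => ?_
          rw [ENNReal.tsum_mul_left]
          congr 1
          rw [tsum_pi_prod (w := fun (_ : Fin n) (x : ℕ+) =>
            if x ≤ N then (((x : ℕ) : ℝ≥0∞))⁻¹ else 0)]
          rw [Finset.prod_const]
          rw [← hsum]
          simp
  have h3 : ∑' N : ℕ+, (((N : ℕ) : ℝ≥0∞) ^ 2)⁻¹ * (hsum N) ^ n ≤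
      ∑' N : ℕ+, ENNReal.ofReal ((((N : ℕ) : ℝ) ^ 2)⁻¹ * (1 + Real.log (N : ℕ)) ^ n) := by
    refine ENNReal.tsum_le_tsum fun N => ?_
    have hlog : (0 : ℝ) ≤ 1 + Real.log (N : ℕ) := by
      have := Real.log_nonneg (show (1:ℝ) ≤ ((N : ℕ) : ℝ) by exact_mod_cast N.one_le)
      linarith
    rw [ENNReal.ofReal_mul (by positivity), ENNReal.ofReal_pow hlog]
    refine mul_le_mul' ?_ ?_
    · rw [ENNReal.ofReal_inv_of_pos (by positivity), ENNReal.ofReal_pow (by positivity)]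
      rw [ENNReal.ofReal_natCast]
    · refine pow_le_pow_left' ?_ n
      rw [hsum_eq]
      exact ENNReal.ofReal_le_ofReal (harmonic_le_one_add_log N)
  have hs : Summable (fun N : ℕ+ => ((((N : ℕ) : ℝ)) ^ 2)⁻¹ * (1 + Real.log (N : ℕ)) ^ n) :=
    (summable_aux n).comp_injective PNat.coe_injective
  have h4 : ∑' N : ℕ+, ENNReal.ofReal ((((N : ℕ) : ℝ) ^ 2)⁻¹ * (1 + Real.log (N : ℕ)) ^ n) =
      ENNReal.ofReal (∑' N : ℕ+, (((( N : ℕ) : ℝ)) ^ 2)⁻¹ * (1 + Real.log (N : ℕ)) ^ n) := by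
    rw [← ENNReal.ofReal_tsum_of_nonneg (fun N => ?_) hs]
    have hlog : (0 : ℝ) ≤ 1 + Real.log (N : ℕ) := by
      have := Real.log_nonneg (show (1:ℝ) ≤ ((N : ℕ) : ℝ) by exact_mod_cast N.one_le)
      linarith
    positivity
  intro htop
  rw [htop] at h1
  have : (⊤ : ℝ≥0∞) ≤ ENNReal.ofReal (∑' N : ℕ+, ((((N : ℕ) : ℝ)) ^ 2)⁻¹ * (1 + Real.log (N : ℕ)) ^ n) :=
    le_trans h1 (le_trans (le_of_eq h2) (le_trans h3 (le_of_eq h4)))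
  exact absurd (lt_of_le_of_lt this ENNReal.ofReal_lt_top) (lt_irrefl _)



lemma E_ne_top (k : ℕ) (m : ℕ+) : E k m ≠ ⊤ := by
  rw [E]
  exact ENNReal.inv_ne_top.2 (pow_ne_zero _ (by exact_mod_cast m.ne_zero))

lemma E_toReal (k : ℕ) (m : ℕ+) : (E k m).toReal = (((m : ℕ) : ℝ) ^ k)⁻¹ := by
  rw [E, ENNReal.toReal_inv, ENNReal.toReal_pow, ENNReal.toReal_natCast]

lemma mzv_eq (ks : List ℕ) : mzv ks = (Z ks.get).toReal := by
  rw [mzv, Z, ENNReal.tsum_toReal_eq (fun f => ENNReal.prod_ne_top fun i _ => E_ne_top _ _)]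
  refine tsum_congr fun f => ?_
  rw [ENNReal.toReal_prod]
  exact Finset.prod_congr rfl fun i _ => by rw [E_toReal]

lemma mzvStar_eq (ls : List ℕ) : mzvStar ls = (Zs ls.get).toReal := by
  rw [mzvStar, Zs, ENNReal.tsum_toReal_eq (fun f => ENNReal.prod_ne_top fun i _ => E_ne_top _ _)]
  refine tsum_congr fun f => ?_
  rw [ENNReal.toReal_prod]
  exact Finset.prod_congr rfl fun i _ => by rw [E_toReal]

lemma antiHook_eq (ks ls : List ℕ) (a : ℕ) :
    zetaAntiHook ks ls a = (AH ks.get ls.get a).toReal := by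
  rw [zetaAntiHook, AH, ENNReal.tsum_toReal_eq (fun t =>
    ENNReal.mul_ne_top
      (ENNReal.mul_ne_top (ENNReal.prod_ne_top fun i _ => E_ne_top _ _)
        (ENNReal.prod_ne_top fun i _ => E_ne_top _ _))
      (E_ne_top _ _))]
  refine tsum_congr fun t => ?_
  rw [ENNReal.toReal_mul, ENNReal.toReal_mul, ENNReal.toReal_prod, ENNReal.toReal_prod,
    E_toReal]
  congr 1
  congr 1
  · exact Finset.prod_congr rfl fun i _ => by rw [E_toReal]
  · exact Finset.prod_congr rfl fun i _ => by rw [E_toReal]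

lemma AH_congr {n n' m m' : ℕ} (hn : n = n') (hm : m = m')
    (k : Fin n → ℕ) (k' : Fin n' → ℕ) (l : Fin m → ℕ) (l' : Fin m' → ℕ) (a : ℕ)
    (hk : ∀ i : Fin n', k' i = k (Fin.cast hn.symm i))
    (hl : ∀ j : Fin m', l' j = l (Fin.cast hm.symm j)) :
    AH k l a = AH k' l' a := by
  subst hn; subst hm
  rw [show k' = k from funext hk, show l' = l from funext hl]

end AntiHookAux

end AntiHookAuxSection

open AntiHookAux in
/-- For nonempty admissible indices `(k₁,…,k_r)` and `(l₁,…,l_s)`,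
`ζ(k₁,…,k_r)·ζ*(l₁,…,l_s)
  = ζ[(k₁,…,k_{r−1})//(l₁,…,l_s); k_r] + ζ[(k₁,…,k_r)//(l₁,…,l_{s−1}); l_s]`. -/
theorem mzv_mul_mzvStar_eq_antiHook (ks ls : List ℕ) (hk : ks ≠ []) (hl : ls ≠ [])
    (hk1 : ∀ k ∈ ks, 1 ≤ k) (hl1 : ∀ l ∈ ls, 1 ≤ l)
    (hka : 2 ≤ ks.getLast hk) (hla : 2 ≤ ls.getLast hl) :
    mzv ks * mzvStar ls =
      zetaAntiHook ks.dropLast ls (ks.getLast hk) +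
        zetaAntiHook ks ls.dropLast (ls.getLast hl) := by
  classical
  rcases ks with _ | ⟨k0, ktl⟩
  · exact absurd rfl hk
  rcases ls with _ | ⟨l0, ltl⟩
  · exact absurd rfl hl
  set ks := k0 :: ktl with hks
  set ls := l0 :: ltl with hls
  set r := ktl.length with hr
  set s := ltl.length with hs
  have hlenk : ks.length = r + 1 := by simp [hks, hr]
  have hlens : ls.length = s + 1 := by simp [hls, hs]
  -- the Fin-indexed exponent functions
  have hgetLastk : ks.getLast hk = ks.get (Fin.last r) := by
    rw [List.getLast_eq_getElem]
    simp [hks]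
    rfl
  have hgetLastl : ls.getLast hl = ls.get (Fin.last s) := by
    rw [List.getLast_eq_getElem]
    simp [hls]
    rfl
  have hk1' : ∀ i : Fin (r + 1), 1 ≤ ks.get i := fun i => hk1 _ (List.get_mem ks i)
  have hl1' : ∀ i : Fin (s + 1), 1 ≤ ls.get i := fun i => hl1 _ (List.get_mem ls i)
  have hka' : 2 ≤ ks.get (Fin.last r) := by rw [← hgetLastk]; exact hka
  have hla' : 2 ≤ ls.get (Fin.last s) := by rw [← hgetLastl]; exact hla
  have hZfin : Z ks.get ≠ ⊤ :=
    Zfin ks.get hk1' hka' StrictMono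
      (fun f hf i => (hf (Fin.castSucc_lt_last i)).le)
  have hZsfin : Zs ls.get ≠ ⊤ :=
    Zfin ls.get hl1' hla' Monotone (fun f hf i => hf (Fin.le_last _))
  have hcore := core (r := r) (s := s) ks.get ls.get
  have hmulfin : Z ks.get * Zs ls.get ≠ ⊤ := ENNReal.mul_ne_top hZfin hZsfin
  have hfin2 : AH (ks.get ∘ Fin.castSucc) ls.get (ks.get (Fin.last r)) ≠ ⊤ ∧
      AH ks.get (ls.get ∘ Fin.castSucc) (ls.get (Fin.last s)) ≠ ⊤ := by
    rw [← ENNReal.add_ne_top, ← hcore]; exact hmulfin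
  -- identify the anti-hook pieces
  have hAH1 : zetaAntiHook ks.dropLast ls (ks.getLast hk) =
      (AH (ks.get ∘ Fin.castSucc) ls.get (ks.get (Fin.last r))).toReal := by
    rw [antiHook_eq, hgetLastk]
    congr 1
    refine AH_congr (by simp [hks]) rfl _ _ _ _ _ ?_ ?_
    · intro i
      simp [List.get_eq_getElem, List.getElem_dropLast]
    · intro j; rfl
  have hAH2 : zetaAntiHook ks ls.dropLast (ls.getLast hl) =
      (AH ks.get (ls.get ∘ Fin.castSucc) (ls.get (Fin.last s))).toReal := by
    rw [antiHook_eq, hgetLastl]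
    congr 1
    refine AH_congr rfl (by simp [hls]) _ _ _ _ _ ?_ ?_
    · intro i; rfl
    · intro j
      simp [List.get_eq_getElem, List.getElem_dropLast]
  rw [mzv_eq, mzvStar_eq, hAH1, hAH2, ← ENNReal.toReal_mul, hcore,
    ENNReal.toReal_add hfin2.1 hfin2.2]
end
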